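/- Let w be a list over a type α of length n. Then List.foldl (fun (st : List (List α) × List α) a => ((a :: st.2) :: st.1, a :: st.2)) ([], []) w = (P, w.reverse), where P is the list [(w.take n).reverse, (w.take (n-1)).reverse, …, (w.take 1).reverse]; formally, P = (List.range n).map (fun i => (w.take (n - i)).reverse). In particular the first component of the fold is the 'prefixes' function mapping [a₁,…,aₙ] to [[aₙ,…,a₁],[aₙ₋₁,…,a₁],…,[a₁]]. -/
import Mathlib


theorem fold_prefixes {α : Type*} (w : List α) :
    List.foldl
      (fun (st : List (List α) × List α) a => ((a :: st.2) :: st.1, a :: st.2))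
      ([], []) w
      = ((List.range w.length).map (fun i => (w.take (w.length - i)).reverse),
          w.reverse) := by
  induction w using List.reverseRecOn with
  | nil => simp
  | append_singleton w a ih =>
    rw [List.foldl_append, ih]
    simp only [List.foldl_cons, List.foldl_nil, List.length_append, List.length_singleton,
      List.reverse_append, List.reverse_singleton, List.singleton_append]
    refine Prod.ext ?_ rfl
    simp only
    rw [List.range_succ_eq_map, List.map_cons, List.map_map]
    congr 1
    · rw [List.take_of_length_le (by simp)]; simp
    · apply List.map_congr_left
      intro i hi
      simp only [List.mem_range] at hi
      simp only [Function.comp_apply]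
      congr 1
      rw [Nat.succ_sub_succ, List.take_append_of_le_length (by omega)]
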